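/- Let a = (a_1,…,a_d) ∈ ℝ^d with a_1 ≥ ⋯ ≥ a_d and a_1 > a_d, let M = #P, and let h ≥ 0 be a real number satisfying h ≤ ∑_{(i,j)∈S_p}(a_i − a_j) for every p ∈ P. Then L^P_h(a) ≤ #S(P) − (M − 1)/2. (This is the analytic content of the paper's Theorem on the upper bound for the Lyapunov dimension: for a P-Anosov representation the Lyapunov exponent vector a = λ(ρ_*μ) and the random walk entropy h = h_μ satisfy the stated hypotheses, and dim_LY = L^P_{h_μ}(λ) while #S(P) = dim 𝓕_P.) -/

import Mathlib

open Finset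

/-- The set of pairs `(i,j)` with `1 ≤ i < j ≤ d` separated by some `p ∈ A`,
i.e. `i ≤ p < j`.  For `A = {p}` this is `S_p`, and for `A = P` it is `S(P)`. -/
def pairSep (d : ℕ) (A : Finset ℕ) : Finset (ℕ × ℕ) :=
  (Finset.Icc 1 d ×ˢ Finset.Icc 1 d).filter fun q => ∃ p ∈ A, q.1 ≤ p ∧ p < q.2

/-- The Lyapunov functional `L^P_h(a)`: the maximum of `∑ r_{ij}` over families
`0 ≤ r_{ij} ≤ 1` indexed by `S(P)` with `∑ r_{ij} (a_i - a_j) ≤ h`. -/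
noncomputable def Lfun (d : ℕ) (P : Finset ℕ) (a : ℕ → ℝ) (h : ℝ) : ℝ :=
  sSup { s : ℝ | ∃ r : ℕ × ℕ → ℝ,
    (∀ q ∈ pairSep d P, 0 ≤ r q ∧ r q ≤ 1) ∧
    (∑ q ∈ pairSep d P, r q * (a q.1 - a q.2)) ≤ h ∧
    s = ∑ q ∈ pairSep d P, r q }

lemma mem_pairSep {d : ℕ} {A : Finset ℕ} {q : ℕ × ℕ} :
    q ∈ pairSep d A ↔ ((1 ≤ q.1 ∧ q.1 ≤ d) ∧ (1 ≤ q.2 ∧ q.2 ≤ d)) ∧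
      ∃ p ∈ A, q.1 ≤ p ∧ p < q.2 := by
  simp [pairSep, and_assoc]

lemma pairSep_mono {d : ℕ} {A B : Finset ℕ} (h : A ⊆ B) : pairSep d A ⊆ pairSep d B := by
  intro q hq
  rw [mem_pairSep] at *
  obtain ⟨h1, p, hp, h2⟩ := hq
  exact ⟨h1, p, h hp, h2⟩

lemma two_mul_card_filter_lt (P : Finset ℕ) :
    2 * ((P ×ˢ P).filter fun z => z.1 < z.2).card = P.card * P.card - P.card := by
  have h1 : ((P ×ˢ P).filter fun z => z.1 < z.2).card
      = ((P ×ˢ P).filter fun z => z.2 < z.1).card := by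
    apply Finset.card_bij (fun z _ => (z.2, z.1))
    · intro z hz
      simp only [mem_filter, mem_product] at *
      tauto
    · intro z _ z' _ h
      simp only [Prod.mk.injEq] at h
      exact Prod.ext h.2 h.1
    · intro z hz
      refine ⟨(z.2, z.1), ?_, rfl⟩
      simp only [mem_filter, mem_product] at *
      tauto
  have h2 : (P ×ˢ P).filter (fun z => z.1 < z.2) ∪ (P ×ˢ P).filter (fun z => z.2 < z.1)
      = P.offDiag := by
    rw [← Finset.filter_or]
    rw [show P.offDiag = (P ×ˢ P).filter (fun z => z.1 ≠ z.2) by ext z; simp [and_assoc]]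
    apply Finset.filter_congr
    intro z _
    constructor
    · rintro (h | h) <;> omega
    · intro h
      omega
  have h3 : Disjoint ((P ×ˢ P).filter (fun z => z.1 < z.2))
      ((P ×ˢ P).filter (fun z => z.2 < z.1)) := by
    rw [Finset.disjoint_left]
    intro z hz hz'
    simp only [mem_filter] at hz hz'
    omega
  have h4 := Finset.card_union_of_disjoint h3
  rw [h2, Finset.offDiag_card] at h4
  omega

/-- The combinatorial core: the sum over `p ∈ P` of `∑_{(i,j) ∈ S(P)∖S_p} (a_i - a_j)`
is at least `#{(p,p') ∈ P² : p < p'} · (a_1 - a_d)`. -/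
lemma core_ineq (d : ℕ) (hd : 2 ≤ d) (P : Finset ℕ) (hP : P.Nonempty)
    (hPsub : P ⊆ Finset.Icc 1 (d - 1)) (a : ℕ → ℝ)
    (ha : ∀ i j, 1 ≤ i → i ≤ j → j ≤ d → a j ≤ a i) :
    ((((P ×ˢ P).filter fun z => z.1 < z.2).card : ℝ)) * (a 1 - a d) ≤
      ∑ p ∈ P, ∑ q ∈ pairSep d P \ pairSep d {p}, (a q.1 - a q.2) := by
  classical
  set pm := P.max' hP with hpm
  have hpmP : pm ∈ P := P.max'_mem hP
  have hbound : ∀ p ∈ P, 1 ≤ p ∧ p ≤ d - 1 := by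
    intro p hp
    have := hPsub hp
    simpa using this
  have hpmb := hbound pm hpmP
  set D := (P ×ˢ P).filter (fun z => z.1 < z.2) with hD
  set W := (P ×ˢ pairSep d P).filter (fun z => z.2 ∉ pairSep d {z.1}) with hW
  set T : ℕ × ℕ → Finset (ℕ × (ℕ × ℕ)) := fun z =>
    if z.2 = pm then {(z.2, (1, z.1 + 1)), (z.1, (z.1 + 1, d))}
    else {(z.2, (1, z.1 + 1)), (z.1, (z.1 + 1, z.2 + 1)), (z.1, (z.2 + 1, d))} with hT
  have hmemSP : ∀ i j : ℕ, 1 ≤ i → j ≤ d → (∃ p ∈ P, i ≤ p ∧ p < j) →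
      (i, j) ∈ pairSep d P := by
    rintro i j hi hj ⟨p, hp, h1, h2⟩
    rw [mem_pairSep]
    have hb := hbound p hp
    exact ⟨⟨⟨hi, by omega⟩, ⟨by omega, hj⟩⟩, p, hp, h1, h2⟩
  have hnotmem : ∀ (x i j : ℕ), ¬ (i ≤ x ∧ x < j) → (i, j) ∉ pairSep d {x} := by
    intro x i j hx hmem
    rw [mem_pairSep] at hmem
    obtain ⟨_, p, hp, h2⟩ := hmem
    simp only [mem_singleton] at hp
    subst hp
    exact hx h2
  -- elements of D
  have hDmem : ∀ z ∈ D, z.1 ∈ P ∧ z.2 ∈ P ∧ z.1 < z.2 := by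
    intro z hz
    simp only [hD, mem_filter, mem_product] at hz
    tauto
  -- each T z lands in W
  have hTW : ∀ z ∈ D, T z ⊆ W := by
    intro z hz t ht
    obtain ⟨hz1, hz2, hzlt⟩ := hDmem z hz
    have hb1 := hbound z.1 hz1
    have hb2 := hbound z.2 hz2
    rw [hW, mem_filter, mem_product]
    by_cases hq : z.2 = pm
    · simp only [hT, if_pos hq, mem_insert, mem_singleton] at ht
      rcases ht with rfl | rfl
      · refine ⟨⟨hz2, hmemSP 1 (z.1 + 1) le_rfl (by omega) ⟨z.1, hz1, by omega, by omega⟩⟩, ?_⟩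
        exact hnotmem _ _ _ (by omega)
      · refine ⟨⟨hz1, hmemSP (z.1 + 1) d (by omega) le_rfl ⟨pm, hpmP, by omega, by omega⟩⟩, ?_⟩
        exact hnotmem _ _ _ (by omega)
    · have hlt : z.2 < pm := lt_of_le_of_ne (P.le_max' z.2 hz2) hq
      simp only [hT, if_neg hq, mem_insert, mem_singleton] at ht
      rcases ht with rfl | rfl | rfl
      · refine ⟨⟨hz2, hmemSP 1 (z.1 + 1) le_rfl (by omega) ⟨z.1, hz1, by omega, by omega⟩⟩, ?_⟩
        exact hnotmem _ _ _ (by omega)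
      · refine ⟨⟨hz1, hmemSP (z.1 + 1) (z.2 + 1) (by omega) (by omega)
          ⟨z.2, hz2, by omega, by omega⟩⟩, ?_⟩
        exact hnotmem _ _ _ (by omega)
      · refine ⟨⟨hz1, hmemSP (z.2 + 1) d (by omega) le_rfl ⟨pm, hpmP, by omega, by omega⟩⟩, ?_⟩
        exact hnotmem _ _ _ (by omega)
  -- disjointness of the T's
  have hdisj : (D : Set (ℕ × ℕ)).PairwiseDisjoint T := by
    intro z1 hz1 z2 hz2 hne
    rw [Finset.mem_coe] at hz1 hz2
    obtain ⟨h11, h12, h1lt⟩ := hDmem z1 hz1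
    obtain ⟨h21, h22, h2lt⟩ := hDmem z2 hz2
    have hb11 := hbound z1.1 h11
    have hb12 := hbound z1.2 h12
    have hb21 := hbound z2.1 h21
    have hb22 := hbound z2.2 h22
    have hle1 : z1.2 ≤ pm := P.le_max' z1.2 h12
    have hle2 : z2.2 ≤ pm := P.le_max' z2.2 h22
    have hne' : ¬ (z1.1 = z2.1 ∧ z1.2 = z2.2) := by
      intro hc
      exact hne (Prod.ext hc.1 hc.2)
    rw [Function.onFun, Finset.disjoint_left]
    intro t ht1 ht2
    by_cases hq1 : z1.2 = pm <;> by_cases hq2 : z2.2 = pm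
    · simp only [hT, if_pos hq1, if_pos hq2, mem_insert, mem_singleton] at ht1 ht2
      rcases ht1 with rfl | rfl <;>
        simp only [Prod.mk.injEq] at ht2 <;> omega
    · have hlt2 : z2.2 < pm := lt_of_le_of_ne hle2 hq2
      simp only [hT, if_pos hq1, if_neg hq2, mem_insert, mem_singleton] at ht1 ht2
      rcases ht1 with rfl | rfl <;>
        simp only [Prod.mk.injEq] at ht2 <;> omega
    · have hlt1 : z1.2 < pm := lt_of_le_of_ne hle1 hq1
      simp only [hT, if_neg hq1, if_pos hq2, mem_insert, mem_singleton] at ht1 ht2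
      rcases ht1 with rfl | rfl | rfl <;>
        simp only [Prod.mk.injEq] at ht2 <;> omega
    · have hlt1 : z1.2 < pm := lt_of_le_of_ne hle1 hq1
      have hlt2 : z2.2 < pm := lt_of_le_of_ne hle2 hq2
      simp only [hT, if_neg hq1, if_neg hq2, mem_insert, mem_singleton] at ht1 ht2
      rcases ht1 with rfl | rfl | rfl <;>
        simp only [Prod.mk.injEq] at ht2 <;> omega
  -- sum over each T z telescopes to a 1 - a d
  have hTsum : ∀ z ∈ D, ∑ t ∈ T z, (a t.2.1 - a t.2.2) = a 1 - a d := by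
    intro z hz
    obtain ⟨hz1, hz2, hzlt⟩ := hDmem z hz
    have hb1 := hbound z.1 hz1
    have hb2 := hbound z.2 hz2
    by_cases hq : z.2 = pm
    · rw [hT]
      simp only [if_pos hq]
      rw [Finset.sum_pair (by simp only [ne_eq, Prod.mk.injEq]; omega)]
      ring
    · rw [hT]
      simp only [if_neg hq]
      rw [Finset.sum_insert (by simp only [mem_insert, mem_singleton, Prod.mk.injEq]; omega),
        Finset.sum_pair (by simp only [ne_eq, Prod.mk.injEq]; omega)]
      ring
  -- rewrite the RHS as a sum over W
  have hRHS : ∑ p ∈ P, ∑ q ∈ pairSep d P \ pairSep d {p}, (a q.1 - a q.2)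
      = ∑ z ∈ W, (a z.2.1 - a z.2.2) := by
    rw [hW, Finset.sum_filter, Finset.sum_product]
    refine Finset.sum_congr rfl fun p hp => ?_
    rw [Finset.sdiff_eq_filter, Finset.sum_filter]
  -- nonnegativity on W
  have hWnn : ∀ z ∈ W, 0 ≤ a z.2.1 - a z.2.2 := by
    intro z hz
    rw [hW, mem_filter, mem_product] at hz
    obtain ⟨⟨_, hz2⟩, _⟩ := hz
    rw [mem_pairSep] at hz2
    obtain ⟨⟨⟨hi1, hi2⟩, hj1, hj2⟩, p, _, hp1, hp2⟩ := hz2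
    have := ha z.2.1 z.2.2 hi1 (by omega) hj2
    linarith
  calc (((P ×ˢ P).filter fun z => z.1 < z.2).card : ℝ) * (a 1 - a d)
      = ∑ _z ∈ D, (a 1 - a d) := by rw [Finset.sum_const, nsmul_eq_mul, hD]
    _ = ∑ z ∈ D, ∑ t ∈ T z, (a t.2.1 - a t.2.2) := (Finset.sum_congr rfl hTsum).symm
    _ = ∑ t ∈ D.biUnion T, (a t.2.1 - a t.2.2) := (Finset.sum_biUnion hdisj).symm
    _ ≤ ∑ z ∈ W, (a z.2.1 - a z.2.2) := by
        apply Finset.sum_le_sum_of_subset_of_nonneg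
        · intro t ht
          rw [Finset.mem_biUnion] at ht
          obtain ⟨z, hz, htz⟩ := ht
          exact hTW z hz htz
        · intro z hz _
          exact hWnn z hz
    _ = ∑ p ∈ P, ∑ q ∈ pairSep d P \ pairSep d {p}, (a q.1 - a q.2) := hRHS.symm

/-- Upper bound on the Lyapunov dimension:
if `a_1 ≥ ⋯ ≥ a_d`, `a_1 > a_d`, `h ≥ 0` and `h ≤ ∑_{(i,j) ∈ S_p} (a_i - a_j)`
for all `p ∈ P`, then `L^P_h(a) ≤ #S(P) - (#P - 1)/2`. -/
theorem stmt0 (d : ℕ) (hd : 2 ≤ d) (P : Finset ℕ) (hP : P.Nonempty)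
    (hPsub : P ⊆ Finset.Icc 1 (d - 1)) (a : ℕ → ℝ)
    (ha : ∀ i j, 1 ≤ i → i ≤ j → j ≤ d → a j ≤ a i)
    (hgap : a d < a 1) (h : ℝ) (hh : 0 ≤ h)
    (hent : ∀ p ∈ P, h ≤ ∑ q ∈ pairSep d {p}, (a q.1 - a q.2)) :
    Lfun d P a h ≤ ((pairSep d P).card : ℝ) - ((P.card : ℝ) - 1) / 2 := by
  classical
  have hP1 : 1 ≤ P.card := hP.card_pos
  have hMN : P.card ≤ (pairSep d P).card := by
    apply Finset.card_le_card_of_injOn (fun p => (p, p + 1))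
    · intro p hp
      have hb := hPsub hp
      rw [mem_Icc] at hb
      show (p, p + 1) ∈ pairSep d P
      rw [mem_pairSep]
      exact ⟨⟨⟨hb.1, by omega⟩, by omega, by omega⟩, p, hp, le_rfl, by omega⟩
    · intro p _ p' _ hpp
      simpa using congrArg Prod.fst hpp
  have hB : 0 ≤ ((pairSep d P).card : ℝ) - ((P.card : ℝ) - 1) / 2 := by
    have h1 : (P.card : ℝ) ≤ (pairSep d P).card := Nat.cast_le.mpr hMN
    have h2 : (1 : ℝ) ≤ P.card := by exact_mod_cast hP1
    linarith
  apply Real.sSup_le _ hB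
  rintro x ⟨r, hr01, hrh, rfl⟩
  have hA : 0 < a 1 - a d := by linarith
  -- key: ∑ (1 - r q) ≥ (M - 1)/2
  have key : ((P.card : ℝ) - 1) / 2 ≤ ∑ q ∈ pairSep d P, (1 - r q) := by
    have hstep1 : ∀ p ∈ P, ∑ q ∈ pairSep d P \ pairSep d {p}, (a q.1 - a q.2)
        ≤ ∑ q ∈ pairSep d P, (1 - r q) * (a q.1 - a q.2) := by
      intro p hp
      have hsub : pairSep d {p} ⊆ pairSep d P :=
        pairSep_mono (by simpa using hp)
      have hsd := Finset.sum_sdiff (f := fun q : ℕ × ℕ => a q.1 - a q.2) hsub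
      have hent' := hent p hp
      have hexp : ∑ q ∈ pairSep d P, (1 - r q) * (a q.1 - a q.2)
          = ∑ q ∈ pairSep d P, (a q.1 - a q.2)
            - ∑ q ∈ pairSep d P, r q * (a q.1 - a q.2) := by
        rw [← Finset.sum_sub_distrib]
        exact Finset.sum_congr rfl fun q _ => by ring
      linarith
    have hSig : ∑ p ∈ P, ∑ q ∈ pairSep d P \ pairSep d {p}, (a q.1 - a q.2)
        ≤ (P.card : ℝ) * ∑ q ∈ pairSep d P, (1 - r q) * (a q.1 - a q.2) := by
      calc ∑ p ∈ P, ∑ q ∈ pairSep d P \ pairSep d {p}, (a q.1 - a q.2)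
          ≤ ∑ _p ∈ P, ∑ q ∈ pairSep d P, (1 - r q) * (a q.1 - a q.2) :=
            Finset.sum_le_sum hstep1
        _ = _ := by rw [Finset.sum_const, nsmul_eq_mul]
    have hcore := core_ineq d hd P hP hPsub a ha
    have hX2 : ∑ q ∈ pairSep d P, (1 - r q) * (a q.1 - a q.2)
        ≤ (a 1 - a d) * ∑ q ∈ pairSep d P, (1 - r q) := by
      rw [Finset.mul_sum]
      apply Finset.sum_le_sum
      intro q hq
      obtain ⟨⟨⟨h1, h2⟩, h3, h4⟩, p, _, h5, h6⟩ := mem_pairSep.mp hq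
      have hub : a q.1 - a q.2 ≤ a 1 - a d := by
        have e1 := ha 1 q.1 le_rfl h1 h2
        have e2 := ha q.2 d h3 h4 le_rfl
        linarith
      have h0 : 0 ≤ 1 - r q := by linarith [(hr01 q hq).2]
      calc (1 - r q) * (a q.1 - a q.2) ≤ (1 - r q) * (a 1 - a d) :=
            mul_le_mul_of_nonneg_left hub h0
        _ = (a 1 - a d) * (1 - r q) := mul_comm _ _
    have hDS : (((P ×ˢ P).filter fun z => z.1 < z.2).card : ℝ)
        ≤ (P.card : ℝ) * ∑ q ∈ pairSep d P, (1 - r q) := by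
      have h1 : (((P ×ˢ P).filter fun z => z.1 < z.2).card : ℝ) * (a 1 - a d)
          ≤ ((P.card : ℝ) * ∑ q ∈ pairSep d P, (1 - r q)) * (a 1 - a d) := by
        calc (((P ×ˢ P).filter fun z => z.1 < z.2).card : ℝ) * (a 1 - a d)
            ≤ ∑ p ∈ P, ∑ q ∈ pairSep d P \ pairSep d {p}, (a q.1 - a q.2) := hcore
          _ ≤ (P.card : ℝ) * ∑ q ∈ pairSep d P, (1 - r q) * (a q.1 - a q.2) := hSig
          _ ≤ (P.card : ℝ) * ((a 1 - a d) * ∑ q ∈ pairSep d P, (1 - r q)) :=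
              mul_le_mul_of_nonneg_left hX2 (Nat.cast_nonneg _)
          _ = _ := by ring
      exact le_of_mul_le_mul_right h1 hA
    have hcard := two_mul_card_filter_lt P
    have hDval : (((P ×ˢ P).filter fun z => z.1 < z.2).card : ℝ)
        = (P.card : ℝ) * ((P.card : ℝ) - 1) / 2 := by
      have hle : P.card ≤ P.card * P.card := Nat.le_mul_of_pos_left _ hP.card_pos
      have h2 : ((2 * ((P ×ˢ P).filter fun z => z.1 < z.2).card : ℕ) : ℝ)
          = (P.card : ℝ) * (P.card : ℝ) - (P.card : ℝ) := by
        rw [hcard, Nat.cast_sub hle]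
        push_cast
        ring
      push_cast at h2
      linarith
    rw [hDval] at hDS
    have hM : (0 : ℝ) < P.card := by exact_mod_cast hP.card_pos
    nlinarith [hDS, hM]
  have hsplit : ∑ q ∈ pairSep d P, (1 - r q)
      = ((pairSep d P).card : ℝ) - ∑ q ∈ pairSep d P, r q := by
    rw [Finset.sum_sub_distrib, Finset.sum_const, nsmul_eq_mul, mul_one]
  linarith
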